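/- Minimum spanning tree realizes MMJ distances: in a finite weighted connected undirected graph, for any minimum spanning tree T and any two vertices v, w, the maximum edge weight on the unique path from v to w in T equals the minimax path distance between v and w in the whole graph (the minimum over all v–w paths of the maximum edge weight on the path). -/

import Mathlib

open scoped Classical in
/-- Total edge weight of a graph on a finite vertex type. -/
noncomputable def treeWeight {V : Type*} [Fintype V] (w : Sym2 V → ℝ) (H : SimpleGraph V) : ℝ :=
  ∑ e ∈ H.edgeFinset, w e

namespace MSTAux

open SimpleGraph

private lemma edges_mapLe {V : Type*} {G G' : SimpleGraph V} (h : G ≤ G') {x y : V}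
    (p : G.Walk x y) : (p.mapLe h).edges = p.edges := by
  rw [Walk.mapLe, Walk.edges_map]
  have h1 : Sym2.map ⇑(SimpleGraph.Hom.ofLE h) = id := by
    funext z
    induction z using Sym2.ind with | _ a b => simp
  rw [h1, List.map_id]

private lemma isAcyclic_of_le {V : Type*} {G H : SimpleGraph V} (h : H ≤ G)
    (hG : G.IsAcyclic) : H.IsAcyclic := fun _ c hc => hG (c.mapLe h) (hc.mapLe h)

private lemma isAcyclic_sup_edge {V : Type*} {H : SimpleGraph V} {c d : V} (hcd : c ≠ d)
    (hH : H.IsAcyclic) (hr : ¬ H.Reachable c d) : (H ⊔ edge c d).IsAcyclic := by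
  intro x C hC
  by_cases he : s(c, d) ∈ C.edges
  · have h2 := ((adj_and_reachable_delete_edges_iff_exists_cycle
      (G := H ⊔ edge c d)).2 ⟨x, C, hC, he⟩).2
    refine hr (h2.mono ?_)
    intro a b hab
    rw [deleteEdges, sdiff_adj] at hab
    rcases hab.1 with h1 | h1
    · exact h1
    · exact absurd h1 hab.2
  · have hsub : ∀ e ∈ C.edges, e ∈ H.edgeSet := by
      intro e heC
      have h1 := C.edges_subset_edgeSet heC
      rw [edgeSet_sup, edge_edgeSet_of_ne hcd] at h1
      rcases h1 with h1 | h1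
      · exact h1
      · exact absurd (h1 ▸ heC) he
    exact hH (C.transfer H hsub) (hC.transfer hsub)

private lemma reach_or {V : Type*} {T : SimpleGraph V} (hT : T.Connected) (a b x : V) :
    (T.deleteEdges {s(a, b)}).Reachable x a ∨ (T.deleteEdges {s(a, b)}).Reachable x b := by
  obtain ⟨W⟩ := hT.preconnected x a
  have step : ∀ {x y : V}, T.Walk x y →
      ((T.deleteEdges {s(a, b)}).Reachable y a ∨ (T.deleteEdges {s(a, b)}).Reachable y b) →
      ((T.deleteEdges {s(a, b)}).Reachable x a ∨ (T.deleteEdges {s(a, b)}).Reachable x b) := by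
    intro x y W
    induction W with
    | nil => exact id
    | @cons x' y' _ h W ih =>
      intro hy
      by_cases hxy : s(x', y') = s(a, b)
      · rw [Sym2.eq_iff] at hxy
        rcases hxy with ⟨rfl, rfl⟩ | ⟨rfl, rfl⟩
        · exact Or.inl (Reachable.refl _)
        · exact Or.inr (Reachable.refl _)
      · have hadj : (T.deleteEdges {s(a, b)}).Adj x' y' := by
          rw [deleteEdges_adj]
          exact ⟨h, by simpa using hxy⟩
        rcases ih hy with h1 | h1
        · exact Or.inl (hadj.reachable.trans h1)
        · exact Or.inr (hadj.reachable.trans h1)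
  exact step W (Or.inl (Reachable.refl _))

open scoped Classical in
private lemma treeWeight_swap {V : Type*} [Fintype V] (w : Sym2 V → ℝ)
    {T T'' : SimpleGraph V} {e f : Sym2 V}
    (hE : T''.edgeSet = insert f (T.edgeSet \ {e})) (he : e ∈ T.edgeSet)
    (hf : f ∉ T.edgeSet \ {e}) :
    treeWeight w T'' + w e = treeWeight w T + w f := by
  have hfin : T''.edgeFinset = insert f (T.edgeFinset.erase e) := by
    ext x
    simp only [mem_edgeFinset, hE, Set.mem_insert_iff, Set.mem_diff, Set.mem_singleton_iff,
      Finset.mem_insert, Finset.mem_erase]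
    tauto
  have hf' : f ∉ T.edgeFinset.erase e := by
    intro hmem
    exact hf ⟨mem_edgeFinset.mp (Finset.mem_of_mem_erase hmem), Finset.ne_of_mem_erase hmem⟩
  rw [treeWeight, treeWeight, hfin, Finset.sum_insert hf',
    ← Finset.add_sum_erase _ w (mem_edgeFinset.mpr he)]
  ring

end MSTAux

open SimpleGraph MSTAux in
theorem mst_realizes_minimax {V : Type*} [Fintype V] (G : SimpleGraph V) (w : Sym2 V → ℝ)
    (hG : G.Connected) (T : SimpleGraph V) (hTG : T ≤ G) (hT : T.IsTree)
    (hmin : ∀ T' : SimpleGraph V, T' ≤ G → T'.IsTree → treeWeight w T ≤ treeWeight w T')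
    (v u : V) (p : T.Walk v u) (hp : p.IsPath) :
    IsLeast {m : WithBot ℝ | ∃ q : G.Walk v u, (q.edges.map w).maximum = m}
      ((p.edges.map w).maximum) := by
  classical
  constructor
  · exact ⟨p.mapLe hTG, by rw [edges_mapLe]⟩
  · rintro m ⟨q, rfl⟩
    apply List.maximum_le_of_forall_le
    intro x hx
    rw [List.mem_map] at hx
    obtain ⟨e, hep, rfl⟩ := hx
    have key : ∃ f ∈ q.edges, w e ≤ w f := by
      by_contra hcon
      push_neg at hcon
      obtain ⟨a, b, rfl⟩ : ∃ a b, e = s(a, b) := by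
        induction e using Sym2.ind with | _ a b => exact ⟨a, b, rfl⟩
      -- the main exchange argument, for an oriented edge
      have main : ∀ a b : V, T.Adj a b → (∀ f ∈ q.edges, w f < w s(a, b)) →
          ¬ (T.deleteEdges {s(a, b)}).Reachable v u →
          (T.deleteEdges {s(a, b)}).Reachable v a →
          (T.deleteEdges {s(a, b)}).Reachable u b → False := by
        clear hcon hep a b
        intro a b hadj hcon hvu hva hub
        set T' := T.deleteEdges {s(a, b)} with hT'def
        set S : Set V := {x | T'.Reachable x a} with hSdef
        have hvS : v ∈ S := hva
        have huS : u ∉ S := fun h => hvu (hva.trans h.symm)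
        obtain ⟨dd, hdq, hdS1, hdS2⟩ := q.exists_boundary_dart S hvS huS
        set c := dd.fst with hcdef
        set d := dd.snd with hddef
        have hGcd : G.Adj c d := dd.adj
        have hcd : c ≠ d := hGcd.ne
        have hfq : s(c, d) ∈ q.edges := List.mem_map_of_mem (f := Dart.edge) hdq
        have hwf : w s(c, d) < w s(a, b) := hcon _ hfq
        have hncd : ¬ T'.Reachable c d := fun h => hdS2 (h.symm.trans hdS1)
        set T'' := T' ⊔ edge c d with hT''def
        have hT''G : T'' ≤ G := by
          refine sup_le ((deleteEdges_le _).trans hTG) ?_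
          intro x y hxy
          rw [edge_adj] at hxy
          rcases hxy.1 with ⟨rfl, rfl⟩ | ⟨rfl, rfl⟩
          · exact hGcd
          · exact hGcd.symm
        have hreach : ∀ x, T''.Reachable x a := by
          intro x
          have hedge : T''.Adj d c := by
            rw [hT''def, sup_adj, edge_adj]
            exact Or.inr ⟨Or.inr ⟨rfl, rfl⟩, hcd.symm⟩
          have hba : T''.Reachable b a := by
            have hdb : T'.Reachable d b := by
              rcases reach_or hT.isConnected a b d with h1 | h1
              · exact absurd h1 hdS2
              · exact h1
            exact (hdb.mono le_sup_left).symm.trans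
              (hedge.reachable.trans (hdS1.mono le_sup_left))
          rcases reach_or hT.isConnected a b x with h1 | h1
          · exact h1.mono le_sup_left
          · exact (h1.mono le_sup_left).trans hba
        have hNV : Nonempty V := ⟨v⟩
        have hT''conn : T''.Connected :=
          Connected.mk fun x y => (hreach x).trans (hreach y).symm
        have hT''tree : T''.IsTree :=
          ⟨hT''conn, isAcyclic_sup_edge hcd (isAcyclic_of_le (deleteEdges_le _) hT.IsAcyclic) hncd⟩
        have hfT' : s(c, d) ∉ T.edgeSet \ {s(a, b)} := by
          intro hmem
          have : T'.Adj c d := by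
            rw [hT'def, deleteEdges_adj]
            exact ⟨hmem.1, by simpa using hmem.2⟩
          exact hncd this.reachable
        have hE : T''.edgeSet = insert s(c, d) (T.edgeSet \ {s(a, b)}) := by
          rw [hT''def, edgeSet_sup, hT'def, edgeSet_deleteEdges, edge_edgeSet_of_ne hcd]
          ext z
          simp only [Set.mem_union, Set.mem_insert_iff, Set.mem_singleton_iff]
          tauto
        have hsw := treeWeight_swap w hE hadj hfT'
        have hle := hmin T'' hT''G hT''tree
        linarith
      -- derive the hypotheses of main
      have hadj : T.Adj a b := p.edges_subset_edgeSet hep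
      have hvu : ¬ (T.deleteEdges {s(a, b)}).Reachable v u := by
        rintro ⟨r⟩
        have hpath : (r.toPath.val.mapLe (deleteEdges_le _)).IsPath :=
          (r.toPath.prop).mapLe _
        have hequal : p = r.toPath.val.mapLe (deleteEdges_le _) := by
          have := hT.IsAcyclic.path_unique ⟨p, hp⟩ ⟨_, hpath⟩
          exact congrArg Subtype.val this
        have : s(a, b) ∈ (r.toPath.val.mapLe (deleteEdges_le {s(a, b)} (G := T))).edges :=
          hequal ▸ hep
        rw [edges_mapLe] at this
        have := r.toPath.val.edges_subset_edgeSet this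
        rw [edgeSet_deleteEdges] at this
        exact this.2 rfl
      rcases reach_or hT.isConnected a b v with hva | hvb
      · have hub : (T.deleteEdges {s(a, b)}).Reachable u b := by
          rcases reach_or hT.isConnected a b u with h1 | h1
          · exact absurd (hva.trans h1.symm) hvu
          · exact h1
        exact main a b hadj hcon hvu hva hub
      · have hua : (T.deleteEdges {s(a, b)}).Reachable u a := by
          rcases reach_or hT.isConnected a b u with h1 | h1
          · exact h1
          · exact absurd (hvb.trans h1.symm) hvu
        have hswap : s(b, a) = s(a, b) := Sym2.eq_swap
        refine main b a hadj.symm ?_ ?_ ?_ ?_ <;> rw [hswap]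
        · exact hcon
        · exact hvu
        · exact hvb
        · exact hua
    obtain ⟨f, hf, hef⟩ := key
    exact le_trans (by exact_mod_cast hef) (List.le_maximum_of_mem' (List.mem_map_of_mem (f := w) hf))
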